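/- ∂f/∂y(x,y) ≥ 0 for all (x,y) in the region Γ₁ = {(x,y) : x > 0, H(x) ≤ y ≤ α(x)}, where f(x,y) = (x - y - xy)/(ε(-x + (1-η)y + xy)). -/

import Mathlib

theorem partial_f_y_nonneg (ε η σ : ℝ) (hε : 0 < ε) (hη0 : 0 < η) (hη1 : η < 1)
    (hσ1 : 1 < σ) (hσ2 : σ < (1 - η)⁻¹)
    (x y : ℝ) (hx : 0 < x) (hy1 : x / (1 + x) ≤ y) (hy2 : y ≤ x / (σ⁻¹ + x)) :
    let f := fun x y : ℝ => (x - y - x*y) / (ε * (-x + (1-η)*y + x*y))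
    0 ≤ deriv (fun y => f x y) y := by
  intro f
  have hσ0 : 0 < σ⁻¹ := by positivity
  have hy0 : 0 < y := lt_of_lt_of_le (by positivity) hy1
  have hσh : 1 - η < σ⁻¹ := by
    have h1η : 0 < 1 - η := by linarith
    have hσ0' : (0:ℝ) < σ := by linarith
    have h1 : σ * σ⁻¹ = 1 := mul_inv_cancel₀ (ne_of_gt hσ0')
    have h2 : (1 - η) * (1 - η)⁻¹ = 1 := mul_inv_cancel₀ (ne_of_gt h1η)
    nlinarith [mul_pos hσ0' h1η]
  have hyx : y * (σ⁻¹ + x) ≤ x := by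
    have h : 0 < σ⁻¹ + x := by positivity
    calc y * (σ⁻¹ + x) ≤ (x / (σ⁻¹ + x)) * (σ⁻¹ + x) := by nlinarith
    _ = x := by field_simp
  have hDneg : ε * (-x + (1-η)*y + x*y) < 0 := by
    have hinner : -x + (1-η)*y + x*y < 0 := by
      nlinarith [mul_pos hy0 (sub_pos.mpr hσh)]
    exact mul_neg_of_pos_of_neg hε hinner
  have hne : ε * (-x + (1-η)*y + x*y) ≠ 0 := ne_of_lt hDneg
  have hN : HasDerivAt (fun y : ℝ => x - y - x*y) (-(1+x)) y := by
    have h := ((hasDerivAt_const y x).sub (hasDerivAt_id y)).sub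
      ((hasDerivAt_id y).const_mul x)
    exact h.congr_deriv (by ring)
  have hD : HasDerivAt (fun y : ℝ => ε * (-x + (1-η)*y + x*y)) (ε * ((1-η) + x)) y := by
    have h := (((hasDerivAt_const y (-x)).add ((hasDerivAt_id y).const_mul (1-η))).add
      ((hasDerivAt_id y).const_mul x)).const_mul ε
    exact h.congr_deriv (by ring)
  have hf := (hN.div hD hne).deriv
  show 0 ≤ deriv (fun y => (x - y - x*y) / (ε * (-x + (1-η)*y + x*y))) y
  erw [hf]
  have hnum : (-(1+x)) * (ε * (-x + (1-η)*y + x*y)) - (x - y - x*y) * (ε * ((1-η) + x))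
      = ε * η * x := by ring
  rw [hnum]
  positivity
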